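/- (Coverage and linear regret of the trivial alternating algorithm.) Let α ∈ (0,1), D > 0, T ≥ 1. Define the data-independent predictions ŝ_t := D for t ∈ {1, …, ⌊(1−α)T⌋} and ŝ_t := 0 for t ∈ {⌊(1−α)T⌋+1, …, T}. Then: (i) for any true radii S_1, …, S_T ∈ (0, D], setting err_t := 1{ŝ_t < S_t}, the empirical coverage error satisfies |(1/T) Σ_{t=1}^{T} err_t − α| ≤ 1/T; and (ii) if moreover S_t = D/2 for all t, then the regret satisfies Σ_{t=1}^{T} ℓ_{1−α}(S_t, ŝ_t) − inf_{s ∈ ℝ} Σ_{t=1}^{T} ℓ_{1−α}(S_t, s) = (αD/2)·⌊(1−α)T⌋ + ((1−α)D/2)·(T − ⌊(1−α)T⌋) ≥ α(1−α)DT − D/2, i.e., the trivial algorithm suffers regret linear in T. -/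

import Mathlib

/-- The `(1-α)`-pinball (quantile) loss `ℓ_{1-α}(S, s)`. -/
noncomputable def pinball (α S s : ℝ) : ℝ := max ((1 - α) * (S - s)) (α * (s - S))

/-- Coverage and linear regret of the trivial alternating algorithm, which predicts
`ŝ_t = D` for `t ≤ ⌊(1-α)T⌋` and `ŝ_t = 0` afterwards:
(i) for any true radii `S_t ∈ (0, D]`, the empirical coverage error is at most `1/T`;
(ii) if `S_t = D/2` for all `t`, the regret equals
`(αD/2)⌊(1-α)T⌋ + ((1-α)D/2)(T - ⌊(1-α)T⌋) ≥ α(1-α)DT - D/2`, i.e. it is linear in `T`. -/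
theorem trivial_algorithm_coverage_and_linear_regret
    (α D : ℝ) (hα : α ∈ Set.Ioo (0:ℝ) 1) (hD : 0 < D) (T : ℕ) (hT : 1 ≤ T) :
    (∀ S : ℕ → ℝ, (∀ t ∈ Finset.Icc 1 T, S t ∈ Set.Ioc 0 D) →
      |(1 / (T:ℝ)) * (∑ t ∈ Finset.Icc 1 T,
          if (if t ≤ ⌊(1 - α) * (T:ℝ)⌋₊ then D else 0) < S t then (1:ℝ) else 0) - α|
        ≤ 1 / T)
    ∧ ((∑ t ∈ Finset.Icc 1 T,
          pinball α (D / 2) (if t ≤ ⌊(1 - α) * (T:ℝ)⌋₊ then D else 0)) -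
        (⨅ s : ℝ, ∑ t ∈ Finset.Icc 1 T, pinball α (D / 2) s)
        = α * D / 2 * (⌊(1 - α) * (T:ℝ)⌋₊ : ℝ)
          + (1 - α) * D / 2 * ((T:ℝ) - (⌊(1 - α) * (T:ℝ)⌋₊ : ℝ)))
    ∧ (α * D / 2 * (⌊(1 - α) * (T:ℝ)⌋₊ : ℝ)
          + (1 - α) * D / 2 * ((T:ℝ) - (⌊(1 - α) * (T:ℝ)⌋₊ : ℝ))
        ≥ α * (1 - α) * D * T - D / 2) := by
  obtain ⟨hα0, hα1⟩ := hα
  set m := ⌊(1 - α) * (T:ℝ)⌋₊ with hm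
  have hT0 : (0:ℝ) < T := by exact_mod_cast hT
  have h1α : (0:ℝ) < 1 - α := by linarith
  have hmle : (m:ℝ) ≤ (1 - α) * T := Nat.floor_le (by positivity)
  have hmlt : (1 - α) * (T:ℝ) < m + 1 := Nat.lt_floor_add_one _
  have hmT : m ≤ T := by
    have : (m:ℝ) ≤ T := le_trans hmle (by nlinarith)
    exact_mod_cast this
  have hIcc : Finset.Icc 1 T = Finset.Ioc 0 T := by
    rw [← Finset.Icc_add_one_left_eq_Ioc]; rfl
  have hsplit : ∀ f : ℕ → ℝ, ∑ t ∈ Finset.Icc 1 T, f t =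
      ∑ t ∈ Finset.Ioc 0 m, f t + ∑ t ∈ Finset.Ioc m T, f t := by
    intro f
    rw [hIcc, Finset.sum_Ioc_consecutive _ (Nat.zero_le m) hmT]
  refine ⟨?_, ?_, ?_⟩
  · intro S hS
    have key : (∑ t ∈ Finset.Icc 1 T,
        if (if t ≤ m then D else 0) < S t then (1:ℝ) else 0) = (T:ℝ) - m := by
      rw [hsplit]
      have h1 : ∑ t ∈ Finset.Ioc 0 m, (if (if t ≤ m then D else 0) < S t then (1:ℝ) else 0) = 0 := by
        apply Finset.sum_eq_zero
        intro t ht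
        simp only [Finset.mem_Ioc] at ht
        have hSt := hS t (Finset.mem_Icc.mpr ⟨ht.1, le_trans ht.2 hmT⟩)
        rw [if_pos ht.2, if_neg (not_lt.mpr hSt.2)]
      have h2 : ∑ t ∈ Finset.Ioc m T, (if (if t ≤ m then D else 0) < S t then (1:ℝ) else 0)
          = ((T - m : ℕ) : ℝ) := by
        calc ∑ t ∈ Finset.Ioc m T, (if (if t ≤ m then D else 0) < S t then (1:ℝ) else 0)
            = ∑ t ∈ Finset.Ioc m T, (1:ℝ) := by
              apply Finset.sum_congr rfl
              intro t ht
              simp only [Finset.mem_Ioc] at ht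
              have hSt := hS t (Finset.mem_Icc.mpr ⟨by omega, ht.2⟩)
              rw [if_neg (not_le.mpr ht.1), if_pos hSt.1]
          _ = ((T - m : ℕ) : ℝ) := by
              rw [Finset.sum_const, Nat.card_Ioc, nsmul_eq_mul, mul_one]
      rw [h1, h2, Nat.cast_sub hmT]; ring
    rw [key]
    have : 1 / (T:ℝ) * ((T:ℝ) - m) - α = ((1-α)*T - m) / T := by
      field_simp; ring
    rw [this, abs_div, abs_of_pos hT0, div_le_div_iff_of_pos_right hT0,
      abs_of_nonneg (by linarith)]
    linarith
  · have hnn : ∀ s : ℝ, (0:ℝ) ≤ ∑ t ∈ Finset.Icc 1 T, pinball α (D/2) s := by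
      intro s
      apply Finset.sum_nonneg
      intro t _
      unfold pinball
      rcases le_total s (D/2) with h | h
      · exact le_max_of_le_left (by nlinarith)
      · exact le_max_of_le_right (by nlinarith)
    have hinf : (⨅ s : ℝ, ∑ t ∈ Finset.Icc 1 T, pinball α (D/2) s) = 0 := by
      have hbdd : BddBelow (Set.range fun s : ℝ => ∑ t ∈ Finset.Icc 1 T, pinball α (D/2) s) :=
        ⟨0, by rintro x ⟨s, rfl⟩; exact hnn s⟩
      apply le_antisymm
      · calc (⨅ s : ℝ, ∑ t ∈ Finset.Icc 1 T, pinball α (D/2) s)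
            ≤ ∑ t ∈ Finset.Icc 1 T, pinball α (D/2) (D/2) := ciInf_le hbdd (D/2)
          _ = 0 := by
            apply Finset.sum_eq_zero
            intro t _
            unfold pinball
            simp
      · exact le_ciInf hnn
    rw [hinf, sub_zero, hsplit]
    have h1 : ∑ t ∈ Finset.Ioc 0 m, pinball α (D/2) (if t ≤ m then D else 0)
        = α * D / 2 * m := by
      calc ∑ t ∈ Finset.Ioc 0 m, pinball α (D/2) (if t ≤ m then D else 0)
          = ∑ t ∈ Finset.Ioc 0 m, (α * D / 2) := by
            apply Finset.sum_congr rfl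
            intro t ht
            simp only [Finset.mem_Ioc] at ht
            rw [if_pos ht.2]
            unfold pinball
            rw [max_eq_right (by nlinarith)]
            ring
        _ = α * D / 2 * m := by
            rw [Finset.sum_const, Nat.card_Ioc, Nat.sub_zero, nsmul_eq_mul]; ring
    have h2 : ∑ t ∈ Finset.Ioc m T, pinball α (D/2) (if t ≤ m then D else 0)
        = (1 - α) * D / 2 * ((T:ℝ) - m) := by
      calc ∑ t ∈ Finset.Ioc m T, pinball α (D/2) (if t ≤ m then D else 0)
          = ∑ t ∈ Finset.Ioc m T, ((1 - α) * D / 2) := by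
            apply Finset.sum_congr rfl
            intro t ht
            simp only [Finset.mem_Ioc] at ht
            rw [if_neg (not_le.mpr ht.1)]
            unfold pinball
            rw [max_eq_left (by nlinarith)]
            ring
        _ = (1 - α) * D / 2 * ((T:ℝ) - m) := by
            rw [Finset.sum_const, Nat.card_Ioc, nsmul_eq_mul, Nat.cast_sub hmT]; ring
    rw [h1, h2]
  · have hTm : (T:ℝ) - m ≥ α * T := by nlinarith
    nlinarith [hmlt, hTm, mul_pos hα0 hD, mul_pos h1α hD]
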